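/- arXiv:1010.0862 — 2 statements merged into one kernel-verified Lean document; each statement's English description precedes it below -/
import Mathlib

section
/- Let 0 < β ≤ 1 and let a be a function supported in B(0,R) such that A_β(a)(y,t) ≤ K R^{n+β}/t^{n+β} for all (y,t) ∈ ℝ^{n+1}_+. If |x| ≥ 2R, then the intrinsic Lusin area function satisfies S_β(a)(x) ≤ C K R^{n+β} |x|^{−(n+β)}, where C depends only on n and β. -/
open MeasureTheory Metric Set

noncomputable section

/-- `ℝⁿ` as a Euclidean space. -/
abbrev Rn (n : ℕ) : Type := EuclideanSpace ℝ (Fin n)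

variable {n : ℕ}

/-- Weighted measure of a set: `w(E) = ∫_E w`. -/
def wMeas (w : Rn n → ℝ) (s : Set (Rn n)) : ℝ := ∫ x in s, w x

/-- The Muckenhoupt `A₁` condition with constant `C`. -/
def IsA1 (w : Rn n → ℝ) (C : ℝ) : Prop :=
  (∀ x, 0 ≤ w x) ∧ MeasureTheory.LocallyIntegrable w ∧
    ∀ (x₀ : Rn n) (R : ℝ), 0 < R →
      (∫ x in ball x₀ R, w x) ≤
        C * (volume (ball x₀ R)).toReal * essInf w (volume.restrict (ball x₀ R))

/-- The Muckenhoupt `A_p` condition (`1 < p`) with constant `C`. -/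
def IsAp (w : Rn n → ℝ) (p C : ℝ) : Prop :=
  (∀ x, 0 ≤ w x) ∧ MeasureTheory.LocallyIntegrable w ∧
    ∀ (x₀ : Rn n) (R : ℝ), 0 < R →
      ((volume (ball x₀ R)).toReal⁻¹ * ∫ x in ball x₀ R, w x) *
        ((volume (ball x₀ R)).toReal⁻¹ * ∫ x in ball x₀ R, (w x) ^ (-(1 / (p - 1)))) ^ (p - 1)
        ≤ C

/-- The reverse Hölder condition `RH_r` with constant `C`. -/
def IsRH (w : Rn n → ℝ) (r C : ℝ) : Prop :=
  ∀ (x₀ : Rn n) (R : ℝ), 0 < R →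
    ((volume (ball x₀ R)).toReal⁻¹ * ∫ x in ball x₀ R, (w x) ^ r) ^ (1 / r) ≤
      C * ((volume (ball x₀ R)).toReal⁻¹ * ∫ x in ball x₀ R, w x)

/-- The class `C_β`: support in the closed unit ball, mean zero, β-Hölder with constant 1. -/
def MemCbeta (β : ℝ) (φ : Rn n → ℝ) : Prop :=
  (∀ x, φ x ≠ 0 → ‖x‖ ≤ 1) ∧ MeasureTheory.Integrable φ ∧ (∫ x, φ x) = 0 ∧
    ∀ x x' : Rn n, |φ x - φ x'| ≤ ‖x - x'‖ ^ β

/-- Convolution `f * φ_t (x)` with the dilation `φ_t(x) = t^{-n} φ(x/t)`. -/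
def convPhi (f φ : Rn n → ℝ) (t : ℝ) (x : Rn n) : ℝ :=
  ∫ y, f y * (t ^ (-(n : ℝ)) * φ (t⁻¹ • (x - y)))

/-- The intrinsic averaging function `A_β(f)(y,t) = sup_{φ ∈ C_β} |f * φ_t(y)|`. -/
def Abeta (β : ℝ) (f : Rn n → ℝ) (y : Rn n) (t : ℝ) : ℝ :=
  ⨆ φ : {φ : Rn n → ℝ // MemCbeta β φ}, |convPhi f φ.1 t y|

/-- The intrinsic Littlewood–Paley `g`-function. -/
def gbeta (β : ℝ) (f : Rn n → ℝ) (x : Rn n) : ℝ :=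
  (∫ t in Ioi (0 : ℝ), (Abeta β f x t) ^ 2 / t) ^ (1 / 2 : ℝ)

/-- The intrinsic Lusin area function of aperture `γ`. -/
def SbetaA (β γ : ℝ) (f : Rn n → ℝ) (x : Rn n) : ℝ :=
  (∫ p in {p : Rn n × ℝ | dist x p.1 < γ * p.2 ∧ 0 < p.2},
      (Abeta β f p.1 p.2) ^ 2 / p.2 ^ (n + 1)) ^ (1 / 2 : ℝ)

/-- The intrinsic `g^*_λ` function. -/
def gstar (lam β : ℝ) (f : Rn n → ℝ) (x : Rn n) : ℝ :=
  (∫ p in {p : Rn n × ℝ | 0 < p.2},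
      (p.2 / (p.2 + dist x p.1)) ^ (lam * (n : ℝ)) * (Abeta β f p.1 p.2) ^ 2 / p.2 ^ (n + 1)) ^
    (1 / 2 : ℝ)

/-- The weighted `L^q` norm `(∫ |g|^q w)^{1/q}`. -/
def wLq (q : ℝ) (w g : Rn n → ℝ) : ℝ := (∫ x, |g x| ^ q * w x) ^ (1 / q)

/-- The weighted Hardy–Littlewood maximal operator. -/
def Mw (w b : Rn n → ℝ) (x : Rn n) : ℝ :=
  ⨆ B : {B : Rn n × ℝ // 0 < B.2 ∧ x ∈ ball B.1 B.2},
    (wMeas w (ball B.1.1 B.1.2))⁻¹ * ∫ y in ball B.1.1 B.1.2, |b y| * w y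

/-- A central `(α, q, 0; w₁, w₂)`-atom supported in `B(0,R)`. -/
def IsCentralAtom (α q R : ℝ) (w₁ w₂ a : Rn n → ℝ) : Prop :=
  MeasureTheory.Integrable a ∧ (∀ x, a x ≠ 0 → x ∈ ball (0 : Rn n) R) ∧
    wLq q w₂ a ≤ (wMeas w₁ (ball (0 : Rn n) R)) ^ (-(α / (n : ℝ))) ∧
    (∫ x, a x) = 0

/-- The homogeneous weighted Herz norm `‖f‖_{\dot K^{α,p}_q(w₁,w₂)}`. -/
def herzNorm (α p q : ℝ) (w₁ w₂ f : Rn n → ℝ) : ℝ :=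
  (∑' k : ℤ,
      (wMeas w₁ (closedBall (0 : Rn n) ((2 : ℝ) ^ k))) ^ (α * p / (n : ℝ)) *
        ((∫ x in closedBall (0 : Rn n) ((2 : ℝ) ^ k) \ closedBall (0 : Rn n) ((2 : ℝ) ^ (k - 1)),
            |f x| ^ q * w₂ x) ^ (1 / q)) ^ p) ^ (1 / p)

/-- far-field decay of the intrinsic Lusin area function:
`S_β(a)(x) ≤ C K R^{n+β} |x|^{-(n+β)}` for `|x| ≥ 2R`. -/
theorem stmt6 (β : ℝ) (hβ : 0 < β) (hβ1 : β ≤ 1) :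
    ∃ C > 0, ∀ (K R : ℝ) (a : Rn n → ℝ), 0 < R → 0 ≤ K →
      (∀ x, a x ≠ 0 → x ∈ ball (0 : Rn n) R) →
      (∀ (y : Rn n) (t : ℝ), 0 < t → Abeta β a y t ≤ K * R ^ ((n : ℝ) + β) / t ^ ((n : ℝ) + β)) →
      ∀ x : Rn n, 2 * R ≤ ‖x‖ →
        SbetaA β 1 a x ≤ C * K * R ^ ((n : ℝ) + β) * ‖x‖ ^ (-((n : ℝ) + β)) := by
  set s : ℝ := (n : ℝ) + β with hs
  have hspos : 0 < s := by positivity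
  set vB : ℝ := (volume (ball (0 : Rn n) 1)).toReal with hvB
  have hvB0 : 0 ≤ vB := ENNReal.toReal_nonneg
  set C0 : ℝ := Real.sqrt (vB / (2 * s)) * 4 ^ s with hC0
  have hC00 : 0 ≤ C0 := by positivity
  refine ⟨C0 + 1, by positivity, ?_⟩
  intro K R a hR hK ha hA x hx
  have hxpos : 0 < ‖x‖ := lt_of_lt_of_le (by linarith) hx
  set m : ℝ := ‖x‖ / 4 with hm
  have hmpos : 0 < m := by positivity
  have hAnn : ∀ (y : Rn n) (t : ℝ), 0 ≤ Abeta β a y t :=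
    fun y t => Real.iSup_nonneg fun φ => abs_nonneg _
  -- vanishing of Abeta for small t in the cone
  have hA0 : ∀ (y : Rn n) (t : ℝ), 0 < t → dist x y < t → t < m → Abeta β a y t = 0 := by
    intro y t ht hdist htm
    have hconv : ∀ φ : {φ : Rn n → ℝ // MemCbeta β φ}, convPhi a φ.1 t y = 0 := by
      intro φ
      have hzero : ∀ z, a z * (t ^ (-(n : ℝ)) * φ.1 (t⁻¹ • (y - z))) = 0 := by
        intro z
        by_cases haz : a z = 0
        · simp [haz]
        by_cases hφz : φ.1 (t⁻¹ • (y - z)) = 0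
        · simp [hφz]
        exfalso
        have hz : ‖z‖ < R := by
          have := ha z haz
          simpa [mem_ball, dist_zero_right] using this
        have h1 : ‖t⁻¹ • (y - z)‖ ≤ 1 := φ.2.1 _ hφz
        have h2 : ‖y - z‖ ≤ t := by
          rw [norm_smul, norm_inv, Real.norm_eq_abs, abs_of_pos ht] at h1
          have h1' := mul_le_mul_of_nonneg_left h1 ht.le
          rw [mul_one] at h1'
          calc ‖y - z‖ = t * (t⁻¹ * ‖y - z‖) := by field_simp
            _ ≤ t := h1'
        have h3 : ‖x‖ ≤ ‖x - y‖ + ‖y - z‖ + ‖z‖ := by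
          have hxe : x = (x - y) + (y - z) + z := by abel
          calc ‖x‖ = ‖(x - y) + (y - z) + z‖ := by rw [← hxe]
            _ ≤ ‖(x - y) + (y - z)‖ + ‖z‖ := norm_add_le _ _
            _ ≤ ‖x - y‖ + ‖y - z‖ + ‖z‖ := by
                have := norm_add_le (x - y) (y - z); linarith
        have h4 : ‖x - y‖ < t := by rwa [dist_eq_norm] at hdist
        have hm' : t < ‖x‖ / 4 := htm
        linarith
      rw [convPhi]
      simp only [hzero]
      exact integral_zero _ _
    refine le_antisymm (Real.iSup_le (fun φ => by rw [hconv φ]; simp) le_rfl) (hAnn y t)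
  -- the sets and the majorant
  set c : ℝ := (K * R ^ s) ^ 2 with hc
  have hc0 : 0 ≤ c := sq_nonneg _
  set e : ℝ := -(2 * s) - ((n : ℝ) + 1) with he
  set T : Set (Rn n × ℝ) := {p | m ≤ p.2 ∧ dist x p.1 < p.2} with hT
  set G : Rn n × ℝ → ℝ := T.indicator (fun p => c * p.2 ^ e) with hG
  set S : Set (Rn n × ℝ) := {p : Rn n × ℝ | dist x p.1 < 1 * p.2 ∧ 0 < p.2} with hS
  have hdistm : Measurable fun p : Rn n × ℝ => dist x p.1 :=
    (continuous_const.dist continuous_fst).measurable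
  have hTmeas : MeasurableSet T :=
    (measurableSet_le measurable_const measurable_snd).inter
      (measurableSet_lt hdistm measurable_snd)
  have hSmeas : MeasurableSet S :=
    (measurableSet_lt hdistm (measurable_const.mul measurable_snd)).inter
      (measurableSet_lt measurable_const measurable_snd)
  have hGnn : ∀ p, 0 ≤ G p := by
    intro p
    refine Set.indicator_nonneg (fun q hq => ?_) p
    exact mul_nonneg hc0 (Real.rpow_nonneg (le_trans hmpos.le hq.1) _)
  have hGmeas : Measurable G := by
    have hGalt : G = T.indicator (fun p => c * Real.exp (Real.log p.2 * e)) := by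
      funext p
      by_cases hp : p ∈ T
      · rw [hG, Set.indicator_of_mem hp, Set.indicator_of_mem hp,
          Real.rpow_def_of_pos (lt_of_lt_of_le hmpos hp.1)]
      · rw [hG, Set.indicator_of_notMem hp, Set.indicator_of_notMem hp]
    rw [hGalt]
    exact ((measurable_const.mul
      (Real.measurable_exp.comp ((Real.measurable_log.comp measurable_snd).mul
        measurable_const)))).indicator hTmeas
  -- pointwise bound on S
  have hbound : ∀ p ∈ S, (Abeta β a p.1 p.2) ^ 2 / p.2 ^ (n + 1) ≤ G p := by
    rintro ⟨y, t⟩ hp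
    obtain ⟨hd, ht⟩ := hp
    simp only at hd ht ⊢
    have hd' : dist x y < t := by rwa [one_mul] at hd
    by_cases htm : t < m
    · rw [hA0 y t ht hd' htm]
      have h0 : (0 : ℝ) ^ 2 / t ^ (n + 1) = 0 := by simp
      rw [h0]
      exact hGnn _
    · push_neg at htm
      have hmem : ((y, t) : Rn n × ℝ) ∈ T := ⟨htm, hd'⟩
      have hGvalp : G (y, t) = c * t ^ e := Set.indicator_of_mem hmem _
      rw [hGvalp]
      have hAle := hA y t ht
      have htpow : (0 : ℝ) < t ^ (n + 1) := pow_pos ht _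
      have h1 : (Abeta β a y t) ^ 2 ≤ (K * R ^ s / t ^ s) ^ 2 :=
        pow_le_pow_left₀ (hAnn y t) hAle 2
      have key : (K * R ^ s / t ^ s) ^ 2 / t ^ (n + 1) = c * t ^ e := by
        have htn : (t : ℝ) ^ (n + 1) = t ^ ((n : ℝ) + 1) := by
          rw [← Real.rpow_natCast t (n + 1)]
          push_cast
          ring_nf
        rw [htn, div_pow, sq (t ^ s), ← Real.rpow_add ht, div_div, ← Real.rpow_add ht,
          div_eq_mul_inv, ← Real.rpow_neg ht.le]
        rw [hc, he]
        ring_nf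
      calc (Abeta β a y t) ^ 2 / t ^ (n + 1)
          ≤ (K * R ^ s / t ^ s) ^ 2 / t ^ (n + 1) := by gcongr
        _ = c * t ^ e := key
  -- inner integrals
  have hsec1 : ∀ t : ℝ, m ≤ t →
      (fun y : Rn n => G (y, t)) = (ball x t).indicator (fun _ => c * t ^ e) := by
    intro t ht
    funext y
    by_cases hy : dist x y < t
    · rw [hG, Set.indicator_of_mem (show ((y, t) : Rn n × ℝ) ∈ T from ⟨ht, hy⟩),
        Set.indicator_of_mem (by rwa [mem_ball, dist_comm])]
    · rw [hG, Set.indicator_of_notMem (fun hmem => hy hmem.2),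
        Set.indicator_of_notMem (by rwa [mem_ball, dist_comm])]
  have hsec2 : ∀ t : ℝ, ¬ m ≤ t → (fun y : Rn n => G (y, t)) = fun _ => (0 : ℝ) := by
    intro t ht
    funext y
    exact Set.indicator_of_notMem (fun hmem => ht hmem.1) _
  have hvol : ∀ t : ℝ, m ≤ t → (volume (ball x t)).toReal = t ^ (n : ℕ) * vB := by
    intro t ht
    have htpos : 0 < t := lt_of_lt_of_le hmpos ht
    rw [Measure.addHaar_ball_of_pos volume x htpos, ENNReal.toReal_mul,
      ENNReal.toReal_ofReal (pow_nonneg htpos.le _)]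
    congr 2
    simp [finrank_euclideanSpace]
  have hinner : ∀ t : ℝ, (∫ y, G (y, t)) =
      (Ici m).indicator (fun t : ℝ => (c * vB) * t ^ (e + (n : ℝ))) t := by
    intro t
    by_cases ht : m ≤ t
    · rw [hsec1 t ht, integral_indicator measurableSet_ball, setIntegral_const,
        Set.indicator_of_mem (mem_Ici.mpr ht), smul_eq_mul, measureReal_def, hvol t ht]
      have htpos : 0 < t := lt_of_lt_of_le hmpos ht
      rw [Real.rpow_add htpos, Real.rpow_natCast]
      ring
    · rw [hsec2 t ht, Set.indicator_of_notMem (fun hmem => ht (mem_Ici.mp hmem))]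
      simp
  have hlt : e + (n : ℝ) < -1 := by
    rw [he]; linarith
  have hIOn : IntegrableOn (fun t : ℝ => (c * vB) * t ^ (e + (n : ℝ))) (Ici m) := by
    rw [integrableOn_Ici_iff_integrableOn_Ioi]
    exact (integrableOn_Ioi_rpow_of_lt hlt hmpos).const_mul _
  have hprod : (volume : Measure (Rn n × ℝ)) = (volume : Measure (Rn n)).prod volume :=
    Measure.volume_eq_prod _ _
  have hGint : Integrable G ((volume : Measure (Rn n)).prod volume) := by
    refine (integrable_prod_iff' ?_).2 ⟨?_, ?_⟩
    · rw [← hprod]; exact hGmeas.aestronglyMeasurable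
    · refine ae_of_all _ fun t => ?_
      by_cases ht : m ≤ t
      · rw [hsec1 t ht]
        exact (integrable_indicator_iff measurableSet_ball).2
          (integrableOn_const measure_ball_lt_top.ne)
      · rw [hsec2 t ht]
        exact integrable_zero _ _ _
    · have hnorm : (fun t : ℝ => ∫ y, ‖G (y, t)‖) = fun t : ℝ => ∫ y, G (y, t) := by
        funext t
        refine integral_congr_ae (ae_of_all _ fun y => ?_)
        show ‖G (y, t)‖ = G (y, t)
        rw [Real.norm_eq_abs, abs_of_nonneg (hGnn _)]
      rw [hnorm]
      have heq : (fun t : ℝ => ∫ y, G (y, t)) =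
          (Ici m).indicator (fun t : ℝ => (c * vB) * t ^ (e + (n : ℝ))) := funext hinner
      rw [heq]
      exact (integrable_indicator_iff measurableSet_Ici).2 hIOn
  have hGintv : Integrable G (volume : Measure (Rn n × ℝ)) := by
    rw [hprod]; exact hGint
  have hGval : (∫ p, G p) = c * vB * (m ^ (-(2 * s)) / (2 * s)) := by
    rw [hprod, integral_prod_symm G hGint]
    have heq : (fun t : ℝ => ∫ y, G (y, t)) =
        (Ici m).indicator (fun t : ℝ => (c * vB) * t ^ (e + (n : ℝ))) := funext hinner
    rw [show (∫ t : ℝ, ∫ y, G (y, t)) = ∫ t : ℝ, (Ici m).indicator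
        (fun t : ℝ => (c * vB) * t ^ (e + (n : ℝ))) t from congrArg _ heq]
    rw [integral_indicator measurableSet_Ici, integral_Ici_eq_integral_Ioi,
      MeasureTheory.integral_const_mul, integral_Ioi_rpow_of_lt hlt hmpos]
    have h2s : e + (n : ℝ) + 1 = -(2 * s) := by rw [he]; ring
    rw [h2s, neg_div, div_neg, neg_neg]
  -- put it together
  have hInn : 0 ≤ ∫ p in S, (Abeta β a p.1 p.2) ^ 2 / p.2 ^ (n + 1) := by
    refine setIntegral_nonneg hSmeas fun p hp => ?_
    exact div_nonneg (sq_nonneg _) (pow_pos hp.2 _).le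
  have hIG : (∫ p in S, (Abeta β a p.1 p.2) ^ 2 / p.2 ^ (n + 1)) ≤ ∫ p in S, G p := by
    refine integral_mono_of_nonneg ?_ hGintv.restrict ?_
    · refine (ae_restrict_iff' hSmeas).2 (ae_of_all _ fun p hp => ?_)
      exact div_nonneg (sq_nonneg _) (pow_pos hp.2 _).le
    · exact (ae_restrict_iff' hSmeas).2 (ae_of_all _ hbound)
  have hSG : (∫ p in S, G p) ≤ ∫ p, G p :=
    setIntegral_le_integral hGintv (ae_of_all _ hGnn)
  have hItot : (∫ p in S, (Abeta β a p.1 p.2) ^ 2 / p.2 ^ (n + 1)) ≤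
      c * vB * (m ^ (-(2 * s)) / (2 * s)) := by
    rw [← hGval]; exact hIG.trans hSG
  -- final computation
  set E : ℝ := K * R ^ s * m ^ (-s) with hE
  have hE0 : 0 ≤ E :=
    mul_nonneg (mul_nonneg hK (Real.rpow_nonneg hR.le _)) (Real.rpow_nonneg hmpos.le _)
  have hBform : c * vB * (m ^ (-(2 * s)) / (2 * s)) = (vB / (2 * s)) * E ^ 2 := by
    rw [hE, hc]
    have hmm : m ^ (-(2 * s)) = (m ^ (-s)) ^ 2 := by
      rw [← Real.rpow_natCast (m ^ (-s)) 2, ← Real.rpow_mul hmpos.le]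
      norm_num
      ring_nf
    rw [hmm]
    ring
  have hsqrt : (((vB / (2 * s)) * E ^ 2) ^ (1 / 2 : ℝ)) = Real.sqrt (vB / (2 * s)) * E := by
    rw [← Real.sqrt_eq_rpow, Real.sqrt_mul (by positivity) (E ^ 2), Real.sqrt_sq hE0]
  have hm4 : m ^ (-s) = 4 ^ s * ‖x‖ ^ (-s) := by
    rw [hm, Real.div_rpow hxpos.le (by norm_num : (0:ℝ) ≤ 4),
      div_eq_mul_inv, Real.rpow_neg (by norm_num : (0:ℝ) ≤ 4) s, inv_inv]
    ring
  have hstep : SbetaA β 1 a x ≤ Real.sqrt (vB / (2 * s)) * E := by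
    rw [SbetaA, ← hS, ← hsqrt]
    exact Real.rpow_le_rpow hInn (hItot.trans hBform.le) (by norm_num)
  have hEq2 : Real.sqrt (vB / (2 * s)) * E = C0 * (K * R ^ s * ‖x‖ ^ (-s)) := by
    rw [hE, hm4, hC0]
    ring
  have hfin : 0 ≤ K * R ^ s * ‖x‖ ^ (-s) :=
    mul_nonneg (mul_nonneg hK (Real.rpow_nonneg hR.le _)) (Real.rpow_nonneg hxpos.le _)
  calc SbetaA β 1 a x ≤ Real.sqrt (vB / (2 * s)) * E := hstep
    _ = C0 * (K * R ^ s * ‖x‖ ^ (-s)) := hEq2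
    _ ≤ (C0 + 1) * (K * R ^ s * ‖x‖ ^ (-s)) :=
        mul_le_mul_of_nonneg_right (by linarith) hfin
    _ = (C0 + 1) * K * R ^ s * ‖x‖ ^ (-s) := by ring
end
end

section
/- Let 0 < β ≤ 1 and let a be a function supported in B(0,R) such that A_β(a)(y,t) ≤ K R^{n+β}/t^{n+β} for all (y,t) ∈ ℝ^{n+1}_+. If |x| ≥ 2R and j ∈ ℕ, then S_{β,2^j}(a)(x) ≤ C 2^{j(3n+2β)/2} K R^{n+β} |x|^{−(n+β)}, with C depending only on n and β. -/
open MeasureTheory Metric Set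

noncomputable section

variable {n : ℕ}

lemma abeta_nonneg (β : ℝ) (a : Rn n → ℝ) (y : Rn n) (t : ℝ) :
    0 ≤ Abeta β a y t := Real.iSup_nonneg fun φ => abs_nonneg _

lemma abeta_eq_zero (β t : ℝ) (ht : 0 < t) (a : Rn n → ℝ) (y : Rn n)
    (h : ∀ z, a z ≠ 0 → t < dist y z) : Abeta β a y t = 0 := by
  have h0 : ∀ φ : {φ : Rn n → ℝ // MemCbeta β φ}, |convPhi a φ.1 t y| = 0 := by
    intro φ
    have hc : convPhi a φ.1 t y = 0 := by
      rw [convPhi, show (fun z => a z * (t ^ (-(n:ℝ)) * φ.1 (t⁻¹ • (y - z)))) = fun _ => (0:ℝ)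
        from ?_, integral_zero]
      funext z
      by_cases hz : a z = 0
      · simp [hz]
      · have hφz : φ.1 (t⁻¹ • (y - z)) = 0 := by
          by_contra hne
          have h1 := φ.2.1 _ hne
          rw [norm_smul, norm_inv, Real.norm_eq_abs, abs_of_pos ht] at h1
          have h2 : ‖y - z‖ ≤ t := by
            rw [inv_mul_le_iff₀ ht] at h1; simpa using h1
          have := h z hz
          rw [dist_eq_norm] at this
          linarith
        simp [hφz]
    rw [hc, abs_zero]
  exact le_antisymm (Real.iSup_le (fun φ => (h0 φ).le) le_rfl)
    (Real.iSup_nonneg fun φ => abs_nonneg _)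

lemma alg_core {β : ℝ} (n j : ℕ) {X : ℝ} (hX : 0 < X) :
    ((2:ℝ)^j)^n * (X / 2^(j+2)) ^ (-(2*((n:ℝ)+β)))
      = 2 ^ (4*((n:ℝ)+β)) * ((2:ℝ) ^ ((j:ℝ)*(3*(n:ℝ)+2*β)/2))^2 * X ^ (-(2*((n:ℝ)+β))) := by
  have hB : (0:ℝ) < 2^(j+2) := by positivity
  rw [Real.div_rpow hX.le hB.le, Real.rpow_neg hB.le, div_inv_eq_mul, ← pow_mul]
  rw [show ((2:ℝ)^(j*n) : ℝ) = (2:ℝ) ^ ((j*n : ℕ) : ℝ) from (Real.rpow_natCast 2 (j*n)).symm,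
      show ((2:ℝ)^(j+2) : ℝ) = (2:ℝ) ^ (((j+2 : ℕ)) : ℝ) from (Real.rpow_natCast 2 (j+2)).symm,
      ← Real.rpow_natCast ((2:ℝ) ^ ((j:ℝ)*(3*(n:ℝ)+2*β)/2)) 2,
      ← Real.rpow_mul (by norm_num : (0:ℝ) ≤ 2),
      ← Real.rpow_mul (by norm_num : (0:ℝ) ≤ 2),
      ← Real.rpow_add (by norm_num : (0:ℝ) < 2),
      mul_comm (X ^ (-(2*((n:ℝ)+β)))) _, ← mul_assoc,
      ← Real.rpow_add (by norm_num : (0:ℝ) < 2)]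
  congr 2
  push_cast
  ring

/-- far-field decay of the varying-aperture square function:
`S_{β,2^j}(a)(x) ≤ C 2^{j(3n+2β)/2} K R^{n+β} |x|^{-(n+β)}` for `|x| ≥ 2R`. -/
theorem stmt12 (β : ℝ) (hβ : 0 < β) (hβ1 : β ≤ 1) :
    ∃ C > 0, ∀ (K R : ℝ) (a : Rn n → ℝ), 0 < R → 0 ≤ K →
      (∀ x, a x ≠ 0 → x ∈ ball (0 : Rn n) R) →
      (∀ (y : Rn n) (t : ℝ), 0 < t → Abeta β a y t ≤ K * R ^ ((n : ℝ) + β) / t ^ ((n : ℝ) + β)) →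
      ∀ (x : Rn n) (j : ℕ), 2 * R ≤ ‖x‖ →
        SbetaA β ((2 : ℝ) ^ j) a x ≤
          C * (2 : ℝ) ^ ((j : ℝ) * (3 * (n : ℝ) + 2 * β) / 2) * K * R ^ ((n : ℝ) + β) *
            ‖x‖ ^ (-((n : ℝ) + β)) := by
  have hν : (0:ℝ) < (n:ℝ) + β := by positivity
  set Vn : ℝ := (volume (ball (0 : Rn n) 1)).toReal with hVndef
  have hVpos : 0 < Vn :=
    ENNReal.toReal_pos (measure_ball_pos volume _ one_pos).ne' measure_ball_lt_top.ne
  have hCpos : 0 < Vn * 2 ^ (4*((n:ℝ)+β)) / (2*((n:ℝ)+β)) :=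
    div_pos (mul_pos hVpos (Real.rpow_pos_of_pos two_pos _)) (by linarith)
  refine ⟨Real.sqrt (Vn * 2 ^ (4*((n:ℝ)+β)) / (2*((n:ℝ)+β))), Real.sqrt_pos.2 hCpos, ?_⟩
  intro K R a hR hK hsupp hA x j hx
  set C : ℝ := Real.sqrt (Vn * 2 ^ (4*((n:ℝ)+β)) / (2*((n:ℝ)+β))) with hCdef
  have hx0 : 0 < ‖x‖ := lt_of_lt_of_le (by linarith) hx
  set M : ℝ := K * R ^ ((n:ℝ)+β) with hMdef
  have hM0 : 0 ≤ M := mul_nonneg hK (Real.rpow_pos_of_pos hR _).le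
  set γ : ℝ := (2:ℝ)^j with hγdef
  have hγ0 : (0:ℝ) < γ := by rw [hγdef]; positivity
  set t₀ : ℝ := ‖x‖ / 2 ^ (j+2) with ht₀def
  have ht₀ : 0 < t₀ := div_pos hx0 (by positivity)
  -- vanishing of Abeta for small t on the cone
  have hvan : ∀ (y : Rn n) (t : ℝ), 0 < t → t < t₀ → dist x y < γ * t → Abeta β a y t = 0 := by
    intro y t ht htt hyt
    refine abeta_eq_zero β t ht a y (fun z hz => ?_)
    have hzR : ‖z‖ < R := by
      have := hsupp z hz; rwa [mem_ball_zero_iff] at this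
    have h1 : ‖x‖ - ‖z‖ ≤ dist x z := by
      rw [dist_eq_norm]; exact norm_sub_norm_le x z
    have h2 : dist x z ≤ dist x y + dist y z := dist_triangle x y z
    have h3 : γ * t < γ * t₀ := by
      exact mul_lt_mul_of_pos_left htt hγ0
    have h4 : γ * t₀ + t₀ ≤ ‖x‖ / 2 := by
      have h2j : (1:ℝ) ≤ 2^j := one_le_pow₀ one_le_two
      have e : (2:ℝ)^(j+2) = 2^j * 4 := by rw [pow_add]; norm_num
      rw [ht₀def, hγdef, e]
      have e2 : (2:ℝ)^j * (‖x‖/(2^j*4)) + ‖x‖/(2^j*4) = ((2^j+1)*‖x‖)/(2^j*4) := by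
        field_simp
      rw [e2, div_le_div_iff₀ (by positivity) (by norm_num : (0:ℝ) < 2)]
      have hxnn : (0:ℝ) ≤ ‖x‖ := norm_nonneg x
      nlinarith
    linarith
  set q : ℝ := 2*((n:ℝ)+β) + ((n:ℝ)+1) with hqdef
  set E' : Set (Rn n × ℝ) := {p : Rn n × ℝ | dist x p.1 < γ * p.2} ∩ {p | t₀ ≤ p.2} with hE'def
  have hE'meas : MeasurableSet E' :=
    ((isOpen_lt (continuous_const.dist continuous_fst)
      (continuous_const.mul continuous_snd)).measurableSet).inter
      (isClosed_le continuous_const continuous_snd).measurableSet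
  set g : Rn n × ℝ → ℝ := E'.indicator (fun p => M^2 * p.2 ^ (-q)) with hgdef
  have hg0 : ∀ p, 0 ≤ g p := fun p =>
    Set.indicator_nonneg
      (fun p hp => mul_nonneg (sq_nonneg M) (Real.rpow_nonneg (ht₀.le.trans hp.2) _)) p
  have hgm : Measurable g := by
    apply Measurable.indicator _ hE'meas
    fun_prop
  -- slices
  have hslice : ∀ τ : ℝ, (fun y : Rn n => g (y, τ)) =
      if t₀ ≤ τ then (ball x (γ*τ)).indicator (fun _ => M^2 * τ ^ (-q)) else 0 := by
    intro τ
    funext y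
    by_cases hτ : t₀ ≤ τ
    · rw [if_pos hτ, hgdef]
      by_cases hyb : y ∈ ball x (γ*τ)
      · rw [Set.indicator_of_mem hyb, Set.indicator_of_mem (Set.mem_inter
          (show (y,τ) ∈ {p : Rn n × ℝ | dist x p.1 < γ * p.2} from mem_ball'.1 hyb)
          (show (y,τ) ∈ {p : Rn n × ℝ | t₀ ≤ p.2} from hτ))]
      · rw [Set.indicator_of_notMem hyb, Set.indicator_of_notMem]
        intro hmem; exact hyb (mem_ball'.2 hmem.1)
    · rw [if_neg hτ, hgdef, Set.indicator_of_notMem]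
      · rfl
      · intro hmem; exact hτ hmem.2
  have hVball : ∀ τ : ℝ, t₀ ≤ τ → (volume (ball x (γ*τ))).toReal = (γ*τ)^n * Vn := by
    intro τ hτ
    have hr : 0 < γ*τ := mul_pos hγ0 (ht₀.trans_le hτ)
    rw [Measure.addHaar_ball_of_pos volume x hr, ENNReal.toReal_mul,
      ENNReal.toReal_ofReal (by positivity), finrank_euclideanSpace_fin]
  set F : ℝ → ℝ := (Ici t₀).indicator (fun τ => ((γ*τ)^n * Vn) * (M^2 * τ ^ (-q))) with hFdef
  have hint_slice : ∀ τ : ℝ, Integrable (fun y : Rn n => g (y, τ)) := by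
    intro τ; rw [hslice τ]; split_ifs with hτ
    · rw [integrable_indicator_iff measurableSet_ball]
      exact integrableOn_const measure_ball_lt_top.ne
    · exact integrable_zero _ _ _
  have hval_slice : ∀ τ : ℝ, (∫ y : Rn n, g (y, τ)) = F τ := by
    intro τ
    rw [hslice τ]
    by_cases hτ : t₀ ≤ τ
    · rw [if_pos hτ, integral_indicator_const _ measurableSet_ball, measureReal_def, hVball τ hτ, hFdef,
        Set.indicator_of_mem (mem_Ici.2 hτ), smul_eq_mul]
    · rw [if_neg hτ, hFdef, Set.indicator_of_notMem (fun h => hτ (mem_Ici.1 h))]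
      simp
  have hnorm_slice : ∀ τ : ℝ, (∫ y : Rn n, ‖g (y, τ)‖) = F τ := by
    intro τ
    rw [show (fun y : Rn n => ‖g (y, τ)‖) = fun y : Rn n => g (y, τ) from
      funext fun y => Real.norm_of_nonneg (hg0 _)]
    exact hval_slice τ
  have ha1 : -(2*((n:ℝ)+β)+1) < -1 := by linarith
  have hpt : ∀ τ : ℝ, τ ∈ Ioi t₀ → ((γ*τ)^n * Vn) * (M^2 * τ ^ (-q))
      = (γ^n * Vn * M^2) * τ ^ (-(2*((n:ℝ)+β)+1)) := by
    intro τ hτ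
    have hτ0 : 0 < τ := ht₀.trans hτ
    have key : τ ^ ((n:ℕ):ℝ) * τ ^ (-q) = τ ^ (-(2*((n:ℝ)+β)+1)) := by
      rw [← Real.rpow_add hτ0]; congr 1; rw [hqdef]; push_cast; ring
    calc ((γ*τ)^n * Vn) * (M^2 * τ ^ (-q))
        = (γ^n * Vn * M^2) * (τ ^ ((n:ℕ):ℝ) * τ ^ (-q)) := by
          rw [Real.rpow_natCast, mul_pow]; ring
      _ = (γ^n * Vn * M^2) * τ ^ (-(2*((n:ℝ)+β)+1)) := by rw [key]
  have hFint : Integrable F := by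
    rw [hFdef, integrable_indicator_iff measurableSet_Ici,
      integrableOn_Ici_iff_integrableOn_Ioi]
    exact IntegrableOn.congr_fun ((integrableOn_Ioi_rpow_of_lt ha1 ht₀).const_mul
      (γ^n * Vn * M^2)) (fun τ hτ => (hpt τ hτ).symm) measurableSet_Ioi
  have hvolprod : (volume : Measure (Rn n × ℝ)) = (volume : Measure (Rn n)).prod volume :=
    Measure.volume_eq_prod _ _
  have hgint : Integrable g := by
    rw [hvolprod]
    refine (integrable_prod_iff' hgm.aestronglyMeasurable).2 ⟨ae_of_all _ hint_slice, ?_⟩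
    rw [show (fun τ : ℝ => ∫ y : Rn n, ‖g (y, τ)‖) = F from funext hnorm_slice]
    exact hFint
  have hgval : (∫ p : Rn n × ℝ, g p)
      = (γ^n * Vn * M^2) * (t₀ ^ (-(2*((n:ℝ)+β))) / (2*((n:ℝ)+β))) := by
    have hgint' : Integrable g ((volume : Measure (Rn n)).prod volume) := by
      rwa [hvolprod] at hgint
    rw [hvolprod, integral_prod_symm g hgint']
    simp only [hval_slice]
    rw [hFdef, integral_indicator measurableSet_Ici, integral_Ici_eq_integral_Ioi,
      setIntegral_congr_fun measurableSet_Ioi hpt, integral_const_mul,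
      integral_Ioi_rpow_of_lt ha1 ht₀,
      show (-(2*((n:ℝ)+β)+1)+1) = -(2*((n:ℝ)+β)) by ring, neg_div_neg_eq]
  -- the right-hand side bound
  set RHS : ℝ := C * (2 : ℝ) ^ ((j : ℝ) * (3 * (n : ℝ) + 2 * β) / 2) * M * ‖x‖ ^ (-((n:ℝ)+β))
    with hRHSdef
  have hRHS0 : 0 ≤ RHS :=
    mul_nonneg (mul_nonneg (mul_nonneg (Real.sqrt_nonneg _)
      (Real.rpow_pos_of_pos two_pos _).le) hM0) (Real.rpow_nonneg (norm_nonneg x) _)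
  have hRHSsq : (γ^n * Vn * M^2) * (t₀ ^ (-(2*((n:ℝ)+β))) / (2*((n:ℝ)+β))) = RHS^2 := by
    have hC2 : C^2 = Vn * 2 ^ (4*((n:ℝ)+β)) / (2*((n:ℝ)+β)) := Real.sq_sqrt hCpos.le
    have hXexp : (‖x‖ ^ (-((n:ℝ)+β)))^2 = ‖x‖ ^ (-(2*((n:ℝ)+β))) := by
      rw [← Real.rpow_natCast (‖x‖ ^ (-((n:ℝ)+β))) 2, ← Real.rpow_mul (norm_nonneg x)]
      congr 1; push_cast; ring
    have hcore := alg_core (β := β) n j hx0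
    rw [hRHSdef, ht₀def, hγdef]
    linear_combination (Vn * M^2 / (2*((n:ℝ)+β))) * hcore
      - ((2:ℝ)^((j:ℝ)*(3*(n:ℝ)+2*β)/2))^2 * M^2 * (‖x‖^(-((n:ℝ)+β)))^2 * hC2
      - (Vn * 2^(4*((n:ℝ)+β)) / (2*((n:ℝ)+β))) * ((2:ℝ)^((j:ℝ)*(3*(n:ℝ)+2*β)/2))^2
          * M^2 * hXexp
  -- main estimate
  rw [show SbetaA β γ a x = (∫ p in {p : Rn n × ℝ | dist x p.1 < γ * p.2 ∧ 0 < p.2},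
      (Abeta β a p.1 p.2) ^ 2 / p.2 ^ (n + 1)) ^ (1 / 2 : ℝ) from rfl]
  have hgoal : (∫ p in {p : Rn n × ℝ | dist x p.1 < γ * p.2 ∧ 0 < p.2},
      (Abeta β a p.1 p.2) ^ 2 / p.2 ^ (n + 1)) ≤ RHS^2 := by
    set Eset : Set (Rn n × ℝ) := {p : Rn n × ℝ | dist x p.1 < γ * p.2 ∧ 0 < p.2} with hEdef
    by_cases hint : IntegrableOn
        (fun p : Rn n × ℝ => (Abeta β a p.1 p.2) ^ 2 / p.2 ^ (n + 1)) Eset volume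
    · have hEmeas : MeasurableSet Eset := by
        rw [show Eset = {p : Rn n × ℝ | dist x p.1 < γ * p.2} ∩ {p : Rn n × ℝ | 0 < p.2}
          from rfl]
        exact ((isOpen_lt (continuous_const.dist continuous_fst)
          (continuous_const.mul continuous_snd)).measurableSet).inter
          ((isOpen_lt continuous_const continuous_snd).measurableSet)
      have hdom : ∀ p : Rn n × ℝ, p ∈ Eset →
          (Abeta β a p.1 p.2) ^ 2 / p.2 ^ (n + 1) ≤ g p := by
        rintro ⟨y, t⟩ hp
        obtain ⟨hp1, hp2⟩ := hp
        by_cases hpt' : t₀ ≤ t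
        · have hmem : ((y, t) : Rn n × ℝ) ∈ E' := ⟨hp1, hpt'⟩
          rw [hgdef, Set.indicator_of_mem hmem]
          have hAt := hA y t hp2
          have hAnn := abeta_nonneg β a y t
          have h2 : (Abeta β a y t)^2 ≤ (M / t ^ ((n:ℝ)+β))^2 := by
            apply pow_le_pow_left₀ hAnn hAt
          have htp : (0:ℝ) < t ^ (n+1) := by positivity
          calc (Abeta β a y t)^2 / t^(n+1) ≤ (M / t ^ ((n:ℝ)+β))^2 / t^(n+1) := by
                gcongr
            _ = M^2 * t ^ (-q) := by
                rw [div_pow, div_div, ← Real.rpow_natCast (t ^ ((n:ℝ)+β)) 2,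
                  ← Real.rpow_mul hp2.le, ← Real.rpow_natCast t (n+1),
                  ← Real.rpow_add hp2, div_eq_mul_inv, ← Real.rpow_neg hp2.le]
                congr 1; rw [hqdef]; push_cast; ring
        · have hmem : ((y, t) : Rn n × ℝ) ∉ E' := fun hmem => hpt' hmem.2
          rw [hgdef, Set.indicator_of_notMem hmem]
          rw [hvan y t hp2 (lt_of_not_ge hpt') hp1]
          simp
      calc (∫ p in Eset, (Abeta β a p.1 p.2) ^ 2 / p.2 ^ (n + 1))
          ≤ ∫ p in Eset, g p := by
            refine integral_mono_ae hint hgint.integrableOn ?_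
            exact (ae_restrict_iff' hEmeas).2 (ae_of_all _ hdom)
        _ ≤ ∫ p : Rn n × ℝ, g p := setIntegral_le_integral hgint (ae_of_all _ hg0)
        _ = RHS^2 := by rw [hgval, hRHSsq]
    · rw [integral_undef hint]
      exact sq_nonneg _
  calc (∫ p in {p : Rn n × ℝ | dist x p.1 < γ * p.2 ∧ 0 < p.2},
        (Abeta β a p.1 p.2) ^ 2 / p.2 ^ (n + 1)) ^ (1 / 2 : ℝ)
      ≤ (RHS^2) ^ (1 / 2 : ℝ) := by
        refine Real.rpow_le_rpow ?_ hgoal (by norm_num)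
        refine setIntegral_nonneg ?_ fun p hp => div_nonneg (sq_nonneg _) (pow_nonneg hp.2.le _)
        exact ((isOpen_lt (continuous_const.dist continuous_fst)
          (continuous_const.mul continuous_snd)).measurableSet).inter
          ((isOpen_lt continuous_const continuous_snd).measurableSet)
    _ = RHS := by
        rw [← Real.rpow_natCast RHS 2, ← Real.rpow_mul hRHS0]
        norm_num
    _ = C * (2 : ℝ) ^ ((j : ℝ) * (3 * (n : ℝ) + 2 * β) / 2) * K * R ^ ((n : ℝ) + β) *
        ‖x‖ ^ (-((n : ℝ) + β)) := by rw [hRHSdef, hMdef]; ring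
end
end
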